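/- If p chords are added to the cycle C_n (n ≥ 3), then the total number of cycles in the resulting graph is at least binomial(p+2, 2). -/

import Mathlib

open SimpleGraph

/-- `e` is a chord of the cycle graph `Cₙ`: an edge between two distinct,
non-adjacent vertices of the cycle. -/
def IsChord (n : ℕ) (e : Sym2 (Fin n)) : Prop :=
  ¬ e.IsDiag ∧ e ∉ (cycleGraph n).edgeSet

/-- The set of edge sets of cycles of a graph `G`; this identifies a cycle
with its edge set, so that each cycle is counted exactly once. -/
def cycleEdgeSets {V : Type*} [DecidableEq V] (G : SimpleGraph V) : Set (Finset (Sym2 V)) :=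
  {E | ∃ (v : V) (w : G.Walk v v), w.IsCycle ∧ w.edges.toFinset = E}

open SimpleGraph.Walk
open Fin.NatCast
open Fin.CommRing

section Aux

variable {n : ℕ} [NeZero n]

lemma val_add_cast (i : Fin n) (m : ℕ) (hm : m < n) :
    ((i + (m : Fin n)).val) = if i.val + m < n then i.val + m else i.val + m - n := by
  rw [Fin.val_add, Fin.val_cast_of_lt hm]
  have hi := i.isLt
  split
  · exact Nat.mod_eq_of_lt (by omega)
  · rw [Nat.mod_eq_sub_mod (by omega), Nat.mod_eq_of_lt (by omega)]

lemma adj_succ (hn : 3 ≤ n) (i : Fin n) : (cycleGraph n).Adj i (i + 1) := by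
  rw [cycleGraph_adj']
  right
  simp only [add_sub_cancel_left]
  rw [Fin.val_one']
  exact Nat.mod_eq_of_lt (by omega)

def arcEdges (i : Fin n) (k : ℕ) : List (Sym2 (Fin n)) :=
  (List.range k).map fun (m : ℕ) => s(i + (m : Fin n), i + (m : Fin n) + 1)

lemma mem_arc_cyc (hn : 3 ≤ n) {x : Sym2 (Fin n)} {i : Fin n} {k : ℕ}
    (hx : x ∈ arcEdges i k) : x ∈ (cycleGraph n).edgeSet := by
  simp only [arcEdges, List.mem_map, List.mem_range] at hx
  obtain ⟨m, _, rfl⟩ := hx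
  exact adj_succ hn _
variable {G : SimpleGraph (Fin n)}
lemma adj_succ2 (hn : 3 ≤ n) (hG : cycleGraph n ≤ G) (i : Fin n) : G.Adj i (i + 1) := hG (adj_succ hn i)
def arcWalk (hn : 3 ≤ n) (hG : cycleGraph n ≤ G) (i : Fin n) :
    (k : ℕ) → G.Walk i (i + (k : Fin n))
  | 0 => Walk.nil.copy rfl (by simp)
  | (k+1) => ((arcWalk hn hG (i+1) k).cons (adj_succ2 hn hG i)).copy rfl
      (by push_cast; ring)

def arcSupp (i : Fin n) (k : ℕ) : List (Fin n) :=
  (List.range (k+1)).map (fun (m : ℕ) => i + (m : Fin n))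

lemma arcWalk_support (hn : 3 ≤ n) (hG : cycleGraph n ≤ G) (i : Fin n) (k : ℕ) :
    (arcWalk hn hG i k).support = arcSupp i k := by
  induction k generalizing i with
  | zero => simp [arcWalk, arcSupp, List.range_succ]
  | succ k ih =>
    rw [arcWalk, support_copy, support_cons, ih, arcSupp, arcSupp,
      List.range_succ_eq_map (n := k+1), List.map_cons, List.map_map]
    congr 1
    · simp
    · apply List.map_congr_left
      intro m _
      simp only [Function.comp_apply, Nat.succ_eq_add_one, Nat.cast_add, Nat.cast_one]
      ring

lemma arcWalk_edges (hn : 3 ≤ n) (hG : cycleGraph n ≤ G) (i : Fin n) (k : ℕ) :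
    (arcWalk hn hG i k).edges = arcEdges i k := by
  induction k generalizing i with
  | zero => simp [arcWalk, arcEdges]
  | succ k ih =>
    rw [arcWalk, edges_copy, edges_cons, ih, arcEdges, arcEdges,
      List.range_succ_eq_map (n := k), List.map_cons, List.map_map]
    congr 1
    · simp
    · apply List.map_congr_left
      intro m _
      simp only [Function.comp_apply, Nat.succ_eq_add_one, Nat.cast_add, Nat.cast_one]
      rw [Sym2.eq_iff]
      left
      constructor <;> ring

lemma mem_arcSupp {x : Fin n} {i : Fin n} {k : ℕ} :
    x ∈ arcSupp i k ↔ ∃ m ≤ k, x = i + (m : Fin n) := by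
  simp only [arcSupp, List.mem_map, List.mem_range, Nat.lt_succ_iff]
  aesop

lemma arcSupp_nodup (i : Fin n) {k : ℕ} (hk : k < n) : (arcSupp i k).Nodup := by
  refine List.Nodup.map_on ?_ List.nodup_range
  intro m hm m' hm' h
  rw [List.mem_range, Nat.lt_succ_iff] at hm hm'
  have := add_left_cancel h
  have h1 : ((m : Fin n)).val = ((m' : Fin n)).val := by rw [this]
  rwa [Fin.val_cast_of_lt (by omega), Fin.val_cast_of_lt (by omega)] at h1

lemma one_arc_mem (hn : 3 ≤ n) (hG : cycleGraph n ≤ G) (i : Fin n) (k : ℕ) (hk : k < n)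
    (h : G.Adj (i + (k : Fin n)) i) (hne : s(i + (k : Fin n), i) ∉ arcEdges i k) :
    ∃ E ∈ cycleEdgeSets G, ∀ x, x ∈ E ↔ x = s(i + (k : Fin n), i) ∨ x ∈ arcEdges i k := by
  refine ⟨_, ⟨_, Walk.cons h (arcWalk hn hG i k), ?_, rfl⟩, ?_⟩
  · rw [cons_isCycle_iff, isPath_def, arcWalk_support, arcWalk_edges]
    exact ⟨arcSupp_nodup i hk, hne⟩
  · intro x
    simp [arcWalk_edges]

lemma two_arcs_mem (hn : 3 ≤ n) (hG : cycleGraph n ≤ G) (i j : Fin n) (k l : ℕ)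
    (hk : k < n) (hl : l < n)
    (h1 : G.Adj (i + (k : Fin n)) j) (h2 : G.Adj (j + (l : Fin n)) i)
    (hc2 : s(j + (l : Fin n), i) ∉ (cycleGraph n).edgeSet)
    (hne : s(i + (k : Fin n), j) ≠ s(j + (l : Fin n), i))
    (hdisj : ∀ m ≤ k, ∀ m' ≤ l, i + (m : Fin n) ≠ j + (m' : Fin n)) :
    ∃ E ∈ cycleEdgeSets G, ∀ x, x ∈ E ↔
      (x = s(i + (k : Fin n), j) ∨ x = s(j + (l : Fin n), i)
        ∨ x ∈ arcEdges i k ∨ x ∈ arcEdges j l) := by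
  refine ⟨_, ⟨_, Walk.cons h2 ((arcWalk hn hG i k).append (Walk.cons h1 (arcWalk hn hG j l))),
    ?_, rfl⟩, ?_⟩
  · rw [cons_isCycle_iff, isPath_def, support_append, arcWalk_support, support_cons,
      arcWalk_support, List.tail_cons, edges_append, edges_cons, arcWalk_edges, arcWalk_edges]
    refine ⟨List.Nodup.append (arcSupp_nodup i hk) (arcSupp_nodup j hl) ?_, ?_⟩
    · intro x hx hx'
      rw [mem_arcSupp] at hx hx'
      obtain ⟨m, hm, rfl⟩ := hx
      obtain ⟨m', hm', h⟩ := hx'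
      exact hdisj m hm m' hm' h
    · intro hmem
      rcases List.mem_append.mp hmem with hx | hx
      · exact hc2 (mem_arc_cyc hn hx)
      · rcases List.mem_cons.mp hx with hx | hx
        · exact hne hx.symm
        · exact hc2 (mem_arc_cyc hn hx)
  · intro x
    simp only [List.mem_toFinset, edges_cons, edges_append, arcWalk_edges, List.mem_cons, List.mem_append]
    tauto

lemma two_arcs_rev_mem (hn : 3 ≤ n) (hG : cycleGraph n ≤ G) (i j : Fin n) (k l : ℕ)
    (hk : k < n) (hl : l < n)
    (h1 : G.Adj (i + (k : Fin n)) (j + (l : Fin n))) (h2 : G.Adj j i)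
    (hc2 : s(j, i) ∉ (cycleGraph n).edgeSet)
    (hne : s(i + (k : Fin n), j + (l : Fin n)) ≠ s(j, i))
    (hdisj : ∀ m ≤ k, ∀ m' ≤ l, i + (m : Fin n) ≠ j + (m' : Fin n)) :
    ∃ E ∈ cycleEdgeSets G, ∀ x, x ∈ E ↔
      (x = s(i + (k : Fin n), j + (l : Fin n)) ∨ x = s(j, i)
        ∨ x ∈ arcEdges i k ∨ x ∈ arcEdges j l) := by
  refine ⟨_, ⟨_, Walk.cons h2 ((arcWalk hn hG i k).append
    (Walk.cons h1 (arcWalk hn hG j l).reverse)), ?_, rfl⟩, ?_⟩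
  · rw [cons_isCycle_iff, isPath_def, support_append, arcWalk_support, support_cons,
      support_reverse, arcWalk_support, List.tail_cons, edges_append, edges_cons,
      edges_reverse, arcWalk_edges, arcWalk_edges]
    refine ⟨List.Nodup.append (arcSupp_nodup i hk) (List.nodup_reverse.mpr (arcSupp_nodup j hl)) ?_, ?_⟩
    · intro x hx hx'
      rw [List.mem_reverse] at hx'
      rw [mem_arcSupp] at hx hx'
      obtain ⟨m, hm, rfl⟩ := hx
      obtain ⟨m', hm', h⟩ := hx'
      exact hdisj m hm m' hm' h
    · intro hmem
      rcases List.mem_append.mp hmem with hx | hx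
      · exact hc2 (mem_arc_cyc hn hx)
      · rcases List.mem_cons.mp hx with hx | hx
        · exact hne hx.symm
        · exact hc2 (mem_arc_cyc hn (List.mem_reverse.mp hx))
  · intro x
    simp only [List.mem_toFinset, edges_cons, edges_append, edges_reverse, arcWalk_edges, List.mem_cons,
      List.mem_append, List.mem_reverse]
    tauto

lemma chord_rep (hn : 3 ≤ n) {e : Sym2 (Fin n)} (he : IsChord n e) :
    ∃ a b : Fin n, e = s(a, b) ∧ a.val + 2 ≤ b.val ∧ b.val + 2 ≤ n + a.val := by
  obtain ⟨x, y⟩ := e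
  obtain ⟨hd, hne⟩ := he
  rw [Sym2.mk_isDiag_iff] at hd
  rw [SimpleGraph.mem_edgeSet, cycleGraph_adj'] at hne
  push_neg at hne
  obtain ⟨h1, h2⟩ := hne
  rcases lt_or_gt_of_ne (show x ≠ y from hd) with h | h
  · refine ⟨x, y, rfl, ?_, ?_⟩
    · have := Fin.coe_sub_iff_le.mpr h.le
      omega
    · have := Fin.coe_sub_iff_lt.mpr h
      have := y.isLt
      omega
  · refine ⟨y, x, Sym2.eq_swap, ?_, ?_⟩
    · have := Fin.coe_sub_iff_le.mpr h.le
      omega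
    · have := Fin.coe_sub_iff_lt.mpr h
      have := x.isLt
      omega
set_option linter.unusedSectionVars false
set_option linter.unusedVariables false

lemma mem_arcEdges {x : Sym2 (Fin n)} {i : Fin n} {k : ℕ} :
    x ∈ arcEdges i k ↔ ∃ m < k, x = s(i + (m : Fin n), i + (m : Fin n) + 1) := by
  simp only [arcEdges, List.mem_map, List.mem_range]
  aesop

lemma add_offset (i j : Fin n) (h : i.val ≤ j.val) :
    i + ((j.val - i.val : ℕ) : Fin n) = j := by
  apply Fin.ext
  rw [val_add_cast (n := n) i _ (by have := j.isLt; omega)]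
  have := j.isLt
  rw [if_pos (show i.val + (j.val - i.val) < n by omega)]
  omega

lemma add_offset_wrap (i j : Fin n) (h : j.val < i.val) :
    i + ((n - i.val + j.val : ℕ) : Fin n) = j := by
  apply Fin.ext
  rw [val_add_cast (n := n) i _ (by have := i.isLt; have := j.isLt; omega)]
  have hi := i.isLt
  have hj := j.isLt
  rw [if_neg (by omega)]
  omega

variable {S : Finset (Sym2 (Fin n))}

lemma chord_adjG (a b : Fin n) (hmem : s(a, b) ∈ S) (hne : a ≠ b) :
    (cycleGraph n ⊔ fromEdgeSet ↑S).Adj a b := by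
  rw [sup_adj, fromEdgeSet_adj]
  exact Or.inr ⟨hmem, hne⟩

lemma inter_S (hS : ∀ e ∈ S, IsChord n e) {E C : Finset (Sym2 (Fin n))}
    (h1 : ∀ x ∈ E, x ∈ C ∨ x ∈ (cycleGraph n).edgeSet)
    (h2 : C ⊆ E) (h3 : C ⊆ S) : E ∩ S = C := by
  ext x
  simp only [Finset.mem_inter]
  constructor
  · rintro ⟨hxE, hxS⟩
    rcases h1 x hxE with h | h
    · exact h
    · exact absurd h (hS x hxS).2
  · intro h
    exact ⟨h2 h, h3 h⟩

lemma base_cycle (hn : 3 ≤ n) (hS : ∀ e ∈ S, IsChord n e) :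
    ∃ E ∈ cycleEdgeSets (cycleGraph n ⊔ fromEdgeSet ↑S), E ∩ S = ∅ := by
  have hvlast : (((n - 1 : ℕ) : Fin n)).val = n - 1 := Fin.val_cast_of_lt (by omega)
  have hadjC : (cycleGraph n).Adj ((0 : Fin n) + ((n - 1 : ℕ) : Fin n)) 0 := by
    rw [cycleGraph_adj']
    right
    rw [zero_add, Fin.sub_def]
    simp only [Fin.val_zero, hvlast]
    have h2 : (n - (n - 1) + 0) = 1 := by omega
    rw [h2, Nat.mod_eq_of_lt (by omega)]
  have hne : s((0 : Fin n) + ((n - 1 : ℕ) : Fin n), (0:Fin n)) ∉ arcEdges (0:Fin n) (n-1) := by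
    rw [mem_arcEdges]
    rintro ⟨m, hm, heq⟩
    rw [Sym2.eq_iff] at heq
    have hvm : ((0 : Fin n) + (m : Fin n)).val = m := by
      rw [zero_add, Fin.val_cast_of_lt (by omega)]
    have hvm1 : ((0 : Fin n) + (m : Fin n) + 1).val = m + 1 := by
      have hc : (0 : Fin n) + (m : Fin n) + 1 = ((m + 1 : ℕ) : Fin n) := by push_cast; ring
      rw [hc, Fin.val_cast_of_lt (by omega)]
    have hvl : ((0 : Fin n) + ((n - 1 : ℕ) : Fin n)).val = n - 1 := by
      rw [zero_add, hvlast]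
    rcases heq with ⟨h1, h2⟩ | ⟨h1, h2⟩
    · have e1 := congrArg Fin.val h1
      rw [hvl, hvm] at e1
      omega
    · have e1 := congrArg Fin.val h1
      have e2 := congrArg Fin.val h2
      rw [hvl, hvm1] at e1
      rw [hvm] at e2
      simp only [Fin.val_zero] at e2
      omega
  obtain ⟨E, hE, hmem⟩ := one_arc_mem hn le_sup_left 0 (n - 1) (by omega)
    (le_sup_left (b := fromEdgeSet ↑S) hadjC) hne
  refine ⟨E, hE, inter_S hS ?_ (Finset.empty_subset _) (Finset.empty_subset _)⟩
  intro x hx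
  right
  rcases (hmem x).mp hx with h | h
  · rw [h]
    exact hadjC
  · exact mem_arc_cyc hn h
lemma not_in_arc (hn : 3 ≤ n) {u : Sym2 (Fin n)} (h : u ∉ (cycleGraph n).edgeSet)
    (i : Fin n) (k : ℕ) : u ∉ arcEdges i k := fun hx => h (mem_arc_cyc hn hx)

lemma val_add_cast_succ (i : Fin n) (m : ℕ) (hm : m + 1 < n) :
    (i + (m : Fin n) + 1).val = if i.val + (m+1) < n then i.val + (m+1) else i.val + (m+1) - n := by
  have hc : i + (m : Fin n) + 1 = i + ((m + 1 : ℕ) : Fin n) := by push_cast; ring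
  rw [hc, val_add_cast i (m+1) hm]

/-- the smaller endpoint of an edge -/
def loE (e : Sym2 (Fin n)) : Fin n :=
  Sym2.lift ⟨fun x y => min x y, fun _ _ => min_comm _ _⟩ e

def loEdge (e : Sym2 (Fin n)) : Sym2 (Fin n) := s(loE e, loE e + 1)

lemma single_cycles (hn : 3 ≤ n) (hS : ∀ e ∈ S, IsChord n e) {e : Sym2 (Fin n)}
    (hmem : e ∈ S) :
    ∃ E₁ ∈ cycleEdgeSets (cycleGraph n ⊔ fromEdgeSet ↑S),
      ∃ E₂ ∈ cycleEdgeSets (cycleGraph n ⊔ fromEdgeSet ↑S),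
        E₁ ∩ S = {e} ∧ E₂ ∩ S = {e} ∧ loEdge e ∈ E₁ ∧ loEdge e ∉ E₂ := by
  obtain ⟨a, b, he, hab, hbn⟩ := chord_rep hn (hS e hmem)
  have hbl := b.isLt
  have hal := a.isLt
  have hlo : loE e = a := by
    rw [he, loE]
    simp only [Sym2.lift_mk]
    exact min_eq_left (by rw [Fin.le_def]; omega)
  have hcyc : e ∉ (cycleGraph n).edgeSet := (hS e hmem).2
  have hne_ab : a ≠ b := by intro h; rw [h] at hab; omega
  have hsucc : (a + 1).val = a.val + 1 := by
    have hc : a + 1 = a + ((1 : ℕ) : Fin n) := by norm_num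
    rw [hc, val_add_cast a 1 (by omega), if_pos (by omega)]
  -- first cycle: arc from a to b, plus chord
  have hk1 : a + ((b.val - a.val : ℕ) : Fin n) = b := add_offset a b (by omega)
  have hadj1 : (cycleGraph n ⊔ fromEdgeSet ↑S).Adj (a + ((b.val - a.val : ℕ) : Fin n)) a := by
    rw [hk1]
    exact (chord_adjG a b (he ▸ hmem) hne_ab).symm
  have hchordsym : s(a + ((b.val - a.val : ℕ) : Fin n), a) = e := by
    rw [hk1, Sym2.eq_swap, he]
  obtain ⟨E₁, hE₁, hmem₁⟩ := one_arc_mem hn le_sup_left a (b.val - a.val) (by omega) hadj1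
    (not_in_arc hn (by rwa [hchordsym]) _ _)
  -- second cycle: arc from b around to a, plus chord
  have hk2 : b + ((n - b.val + a.val : ℕ) : Fin n) = a := add_offset_wrap b a (by omega)
  have hadj2 : (cycleGraph n ⊔ fromEdgeSet ↑S).Adj (b + ((n - b.val + a.val : ℕ) : Fin n)) b := by
    rw [hk2]
    exact chord_adjG a b (he ▸ hmem) hne_ab
  have hchordsym2 : s(b + ((n - b.val + a.val : ℕ) : Fin n), b) = e := by
    rw [hk2, he]
  obtain ⟨E₂, hE₂, hmem₂⟩ := one_arc_mem hn le_sup_left b (n - b.val + a.val) (by omega) hadj2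
    (not_in_arc hn (by rwa [hchordsym2]) _ _)
  refine ⟨E₁, hE₁, E₂, hE₂, ?_, ?_, ?_, ?_⟩
  · refine inter_S hS ?_ ?_ (by simpa using hmem)
    · intro x hx
      rcases (hmem₁ x).mp hx with h | h
      · left; rw [h, hchordsym]; exact Finset.mem_singleton_self e
      · right; exact mem_arc_cyc hn h
    · intro x hx
      rw [Finset.mem_singleton] at hx
      subst hx
      exact (hmem₁ _).mpr (Or.inl hchordsym.symm)
  · refine inter_S hS ?_ ?_ (by simpa using hmem)
    · intro x hx
      rcases (hmem₂ x).mp hx with h | h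
      · left; rw [h, hchordsym2]; exact Finset.mem_singleton_self e
      · right; exact mem_arc_cyc hn h
    · intro x hx
      rw [Finset.mem_singleton] at hx
      subst hx
      exact (hmem₂ _).mpr (Or.inl hchordsym2.symm)
  · -- loEdge e ∈ E₁
    apply (hmem₁ _).mpr
    right
    rw [mem_arcEdges]
    exact ⟨0, by omega, by rw [loEdge, hlo]; norm_num⟩
  · -- loEdge e ∉ E₂
    intro hx
    rcases (hmem₂ _).mp hx with h | h
    · rw [hchordsym2, loEdge, hlo, he] at h
      rw [Sym2.eq_iff] at h
      rcases h with ⟨h1, h2⟩ | ⟨h1, h2⟩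
      · have := congrArg Fin.val h2
        rw [hsucc] at this
        omega
      · exact hne_ab h1
    · rw [mem_arcEdges] at h
      obtain ⟨m, hm, h⟩ := h
      rw [loEdge, hlo, Sym2.eq_iff] at h
      have hv1 : (b + (m : Fin n)).val = if b.val + m < n then b.val + m else b.val + m - n :=
        val_add_cast b m (by omega)
      have hv2 : (b + (m : Fin n) + 1).val =
          if b.val + (m+1) < n then b.val + (m+1) else b.val + (m+1) - n :=
        val_add_cast_succ b m (by omega)
      rcases h with ⟨h1, h2⟩ | ⟨h1, h2⟩
      · have e1 := congrArg Fin.val h1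
        rw [hv1] at e1
        split at e1 <;> omega
      · have e1 := congrArg Fin.val h1
        have e2 := congrArg Fin.val h2
        rw [hv2] at e1
        rw [hsucc, hv1] at e2
        split at e1 <;> split at e2 <;> omega
lemma pair_subset_mem {E : Finset (Sym2 (Fin n))} {u v : Sym2 (Fin n)}
    (hu : u ∈ E) (hv : v ∈ E) : {u, v} ⊆ E := by
  intro x hx
  rcases Finset.mem_insert.mp hx with h | h
  · exact h ▸ hu
  · exact (Finset.mem_singleton.mp h) ▸ hv

lemma config_N (hn : 3 ≤ n) (hS : ∀ e ∈ S, IsChord n e) {a b c d : Fin n}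
    (hea : s(a,b) ∈ S) (hfc : s(c,d) ∈ S) (hef : s(a,b) ≠ s(c,d))
    (hab : a.val < b.val) (hcd : c.val < d.val) (hac : a.val ≤ c.val) (hdb : d.val ≤ b.val) :
    ∃ E ∈ cycleEdgeSets (cycleGraph n ⊔ fromEdgeSet ↑S), E ∩ S = {s(a,b), s(c,d)} := by
  have hbl := b.isLt
  have hdl := d.isLt
  have hik : a + ((c.val - a.val : ℕ) : Fin n) = c := add_offset a c hac
  have hjl : d + ((b.val - d.val : ℕ) : Fin n) = b := add_offset d b hdb
  have hsba : s(b, a) = s(a, b) := Sym2.eq_swap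
  obtain ⟨E, hE, hmem⟩ := two_arcs_mem hn le_sup_left a d (c.val - a.val) (b.val - d.val)
    (by omega) (by omega)
    (by rw [hik]; exact chord_adjG c d hfc (Fin.ne_of_val_ne (by omega)))
    (by rw [hjl]; exact (chord_adjG a b hea (Fin.ne_of_val_ne (by omega))).symm)
    (by rw [hjl, hsba]; exact (hS _ hea).2)
    (by
      rw [hik, hjl, hsba]
      intro h
      exact hef (h.symm))
    (by
      intro m hm m' hm' h
      have e1 := congrArg Fin.val h
      rw [val_add_cast a m (by omega), val_add_cast d m' (by omega),
        if_pos (by omega), if_pos (by omega)] at e1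
      omega)
  simp only [hik, hjl] at hmem
  refine ⟨E, hE, inter_S hS ?_ ?_ ?_⟩
  · intro x hx
    rcases (hmem x).mp hx with h | h | h | h
    · left; rw [h]; exact Finset.mem_insert_of_mem (Finset.mem_singleton_self _)
    · left; rw [h, hsba]; exact Finset.mem_insert_self _ _
    · right; exact mem_arc_cyc hn h
    · right; exact mem_arc_cyc hn h
  · exact pair_subset_mem ((hmem _).mpr (Or.inr (Or.inl hsba.symm)))
      ((hmem _).mpr (Or.inl rfl))
  · exact pair_subset_mem (by simpa using hea) (by simpa using hfc) |>.trans (le_refl _)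

lemma config_D (hn : 3 ≤ n) (hS : ∀ e ∈ S, IsChord n e) {a b c d : Fin n}
    (hea : s(a,b) ∈ S) (hfc : s(c,d) ∈ S)
    (hab : a.val < b.val) (hcd : c.val < d.val) (hbc : b.val ≤ c.val) :
    ∃ E ∈ cycleEdgeSets (cycleGraph n ⊔ fromEdgeSet ↑S), E ∩ S = {s(a,b), s(c,d)} := by
  have hbl := b.isLt
  have hdl := d.isLt
  have hcl := c.isLt
  have hik : b + ((c.val - b.val : ℕ) : Fin n) = c := add_offset b c hbc
  have hjl : d + ((n - d.val + a.val : ℕ) : Fin n) = a := add_offset_wrap d a (by omega)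
  obtain ⟨E, hE, hmem⟩ := two_arcs_mem hn le_sup_left b d (c.val - b.val) (n - d.val + a.val)
    (by omega) (by omega)
    (by rw [hik]; exact chord_adjG c d hfc (Fin.ne_of_val_ne (by omega)))
    (by rw [hjl]; exact chord_adjG a b hea (Fin.ne_of_val_ne (by omega)))
    (by rw [hjl]; exact (hS _ hea).2)
    (by
      rw [hik, hjl]
      intro h
      rw [Sym2.eq_iff] at h
      rcases h with ⟨h1, h2⟩ | ⟨h1, h2⟩
      · exact absurd (congrArg Fin.val h1) (by omega)
      · exact absurd (congrArg Fin.val h1) (by omega))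
    (by
      intro m hm m' hm' h
      have e1 := congrArg Fin.val h
      rw [val_add_cast b m (by omega), val_add_cast d m' (by omega), if_pos (by omega)] at e1
      split at e1 <;> omega)
  simp only [hik, hjl] at hmem
  refine ⟨E, hE, inter_S hS ?_ ?_ ?_⟩
  · intro x hx
    rcases (hmem x).mp hx with h | h | h | h
    · left; rw [h]; exact Finset.mem_insert_of_mem (Finset.mem_singleton_self _)
    · left; rw [h]; exact Finset.mem_insert_self _ _
    · right; exact mem_arc_cyc hn h
    · right; exact mem_arc_cyc hn h
  · exact pair_subset_mem ((hmem _).mpr (Or.inr (Or.inl rfl)))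
      ((hmem _).mpr (Or.inl rfl))
  · exact pair_subset_mem (by simpa using hea) (by simpa using hfc) |>.trans (le_refl _)

lemma config_C (hn : 3 ≤ n) (hS : ∀ e ∈ S, IsChord n e) {a b c d : Fin n}
    (hea : s(a,b) ∈ S) (hfc : s(c,d) ∈ S)
    (hac : a.val < c.val) (hcb : c.val < b.val) (hbd : b.val < d.val) :
    ∃ E ∈ cycleEdgeSets (cycleGraph n ⊔ fromEdgeSet ↑S), E ∩ S = {s(a,b), s(c,d)} := by
  have hbl := b.isLt
  have hdl := d.isLt
  have hik : a + ((c.val - a.val : ℕ) : Fin n) = c := add_offset a c (by omega)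
  have hjl : b + ((d.val - b.val : ℕ) : Fin n) = d := add_offset b d (by omega)
  have hsba : s(b, a) = s(a, b) := Sym2.eq_swap
  obtain ⟨E, hE, hmem⟩ := two_arcs_rev_mem hn le_sup_left a b (c.val - a.val) (d.val - b.val)
    (by omega) (by omega)
    (by rw [hik, hjl]; exact chord_adjG c d hfc (Fin.ne_of_val_ne (by omega)))
    ((chord_adjG a b hea (Fin.ne_of_val_ne (by omega))).symm)
    (by rw [hsba]; exact (hS _ hea).2)
    (by
      rw [hik, hjl, hsba]
      intro h
      rw [Sym2.eq_iff] at h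
      rcases h with ⟨h1, h2⟩ | ⟨h1, h2⟩
      · exact absurd (congrArg Fin.val h1) (by omega)
      · exact absurd (congrArg Fin.val h1) (by omega))
    (by
      intro m hm m' hm' h
      have e1 := congrArg Fin.val h
      rw [val_add_cast a m (by omega), val_add_cast b m' (by omega),
        if_pos (by omega), if_pos (by omega)] at e1
      omega)
  simp only [hik, hjl] at hmem
  refine ⟨E, hE, inter_S hS ?_ ?_ ?_⟩
  · intro x hx
    rcases (hmem x).mp hx with h | h | h | h
    · left; rw [h]; exact Finset.mem_insert_of_mem (Finset.mem_singleton_self _)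
    · left; rw [h, hsba]; exact Finset.mem_insert_self _ _
    · right; exact mem_arc_cyc hn h
    · right; exact mem_arc_cyc hn h
  · exact pair_subset_mem ((hmem _).mpr (Or.inr (Or.inl hsba.symm)))
      ((hmem _).mpr (Or.inl rfl))
  · exact pair_subset_mem (by simpa using hea) (by simpa using hfc) |>.trans (le_refl _)
lemma pair_cycles (hn : 3 ≤ n) (hS : ∀ e ∈ S, IsChord n e) {e f : Sym2 (Fin n)}
    (he : e ∈ S) (hf : f ∈ S) (hef : e ≠ f) :
    ∃ E ∈ cycleEdgeSets (cycleGraph n ⊔ fromEdgeSet ↑S), E ∩ S = {e, f} := by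
  obtain ⟨a, b, rfl, hab, _⟩ := chord_rep hn (hS e he)
  obtain ⟨c, d, rfl, hcd, _⟩ := chord_rep hn (hS f hf)
  have hab' : a.val < b.val := by omega
  have hcd' : c.val < d.val := by omega
  rcases le_or_gt a.val c.val with h1 | h1
  · rcases le_or_gt d.val b.val with h2 | h2
    · exact config_N hn hS he hf hef hab' hcd' h1 h2
    · rcases lt_or_ge c.val b.val with h3 | h3
      · rcases lt_or_ge a.val c.val with h4 | h4
        · exact config_C hn hS he hf h4 h3 h2
        · obtain ⟨E, hE, hES⟩ := config_N hn hS hf he (Ne.symm hef) hcd' hab'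
            (by omega) (by omega)
          exact ⟨E, hE, by rw [hES, Finset.pair_comm]⟩
      · exact config_D hn hS he hf hab' hcd' h3
  · rcases le_or_gt b.val d.val with h2 | h2
    · obtain ⟨E, hE, hES⟩ := config_N hn hS hf he (Ne.symm hef) hcd' hab'
        (by omega) (by omega)
      exact ⟨E, hE, by rw [hES, Finset.pair_comm]⟩
    · rcases lt_or_ge a.val d.val with h3 | h3
      · obtain ⟨E, hE, hES⟩ := config_C hn hS hf he h1 h3 h2
        exact ⟨E, hE, by rw [hES, Finset.pair_comm]⟩
      · obtain ⟨E, hE, hES⟩ := config_D hn hS hf he hcd' hab' h3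
        exact ⟨E, hE, by rw [hES, Finset.pair_comm]⟩

lemma pairset_cycles (hn : 3 ≤ n) (hS : ∀ e ∈ S, IsChord n e) {x : Finset (Sym2 (Fin n))}
    (hx : x ∈ S.powersetCard 2) :
    ∃ E ∈ cycleEdgeSets (cycleGraph n ⊔ fromEdgeSet ↑S), E ∩ S = x := by
  rw [Finset.mem_powersetCard] at hx
  obtain ⟨hsub, hcard⟩ := hx
  obtain ⟨e, f, hef, rfl⟩ := Finset.card_eq_two.mp hcard
  exact pair_cycles hn hS (hsub (Finset.mem_insert_self _ _))
    (hsub (Finset.mem_insert_of_mem (Finset.mem_singleton_self _))) hef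
/-- classifying invariant for the injection -/
def Q {n : ℕ} [NeZero n] (S : Finset (Sym2 (Fin n))) :
    (Unit ⊕ ({x // x ∈ S} × Bool) ⊕ {x // x ∈ S.powersetCard 2}) →
      Finset (Sym2 (Fin n)) → Prop
  | .inl _, E => E ∩ S = ∅
  | .inr (.inl (e, b)), E => E ∩ S = {e.val} ∧ (loEdge e.val ∈ E ↔ b = true)
  | .inr (.inr x), E => E ∩ S = x.val

theorem stmt_0 (n p : ℕ) (hn : 3 ≤ n) (S : Finset (Sym2 (Fin n)))
    (hchords : ∀ e ∈ S, IsChord n e) (hp : S.card = p) :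
    (p + 2).choose 2 ≤ (cycleEdgeSets (cycleGraph n ⊔ fromEdgeSet ↑S)).ncard := by
  haveI : NeZero n := ⟨by omega⟩
  classical
  have key : ∀ i : Unit ⊕ ({x // x ∈ S} × Bool) ⊕ {x // x ∈ S.powersetCard 2},
      ∃ E, E ∈ cycleEdgeSets (cycleGraph n ⊔ fromEdgeSet ↑S) ∧ Q S i E := by
    rintro (⟨⟩ | ⟨⟨e, he⟩, b⟩ | ⟨x, hx⟩)
    · obtain ⟨E, h1, h2⟩ := base_cycle hn hchords
      exact ⟨E, h1, h2⟩
    · obtain ⟨E₁, h1, E₂, h2, k1, k2, k3, k4⟩ := single_cycles hn hchords he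
      cases b
      · exact ⟨E₂, h2, k2, by simp [k4]⟩
      · exact ⟨E₁, h1, k1, by simp [k3]⟩
    · obtain ⟨E, h1, h2⟩ := pairset_cycles hn hchords hx
      exact ⟨E, h1, h2⟩
  choose F hFC hFQ using key
  have hinj : Function.Injective F := by
    intro i j hij
    rcases i with ⟨⟩ | ⟨⟨e, he⟩, b⟩ | ⟨x, hx⟩ <;> rcases j with ⟨⟩ | ⟨⟨e', he'⟩, b'⟩ | ⟨x', hx'⟩
    · rfl
    · exfalso
      have h0 : F (Sum.inl ()) ∩ S = ∅ := hFQ (Sum.inl ())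
      have h1 : F (Sum.inr (Sum.inl (⟨e', he'⟩, b'))) ∩ S = {e'} :=
        (hFQ (Sum.inr (Sum.inl (⟨e', he'⟩, b')))).1
      rw [hij] at h0
      exact Finset.singleton_ne_empty e' (h1.symm.trans h0)
    · exfalso
      have h0 : F (Sum.inl ()) ∩ S = ∅ := hFQ (Sum.inl ())
      have h1 : F (Sum.inr (Sum.inr ⟨x', hx'⟩)) ∩ S = x' := hFQ (Sum.inr (Sum.inr ⟨x', hx'⟩))
      rw [hij] at h0
      have hc := (Finset.mem_powersetCard.mp hx').2
      rw [h1.symm.trans h0] at hc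
      simp at hc
    · exfalso
      have h0 : F (Sum.inl ()) ∩ S = ∅ := hFQ (Sum.inl ())
      have h1 : F (Sum.inr (Sum.inl (⟨e, he⟩, b))) ∩ S = {e} :=
        (hFQ (Sum.inr (Sum.inl (⟨e, he⟩, b)))).1
      rw [← hij] at h0
      exact Finset.singleton_ne_empty e (h1.symm.trans h0)
    · -- single vs single
      obtain ⟨h1S, h1m⟩ := hFQ (Sum.inr (Sum.inl (⟨e, he⟩, b)))
      obtain ⟨h2S, h2m⟩ := hFQ (Sum.inr (Sum.inl (⟨e', he'⟩, b')))
      rw [hij, h2S] at h1S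
      obtain rfl : e' = e := Finset.singleton_inj.mp h1S
      rw [hij] at h1m
      have hb : b = b' := by
        have := h1m.symm.trans h2m
        cases b <;> cases b' <;> simp_all
      subst hb
      rfl
    · exfalso
      obtain ⟨h1S, _⟩ := hFQ (Sum.inr (Sum.inl (⟨e, he⟩, b)))
      have h2 : F (Sum.inr (Sum.inr ⟨x', hx'⟩)) ∩ S = x' := hFQ (Sum.inr (Sum.inr ⟨x', hx'⟩))
      rw [hij, h2] at h1S
      have hc := (Finset.mem_powersetCard.mp hx').2
      rw [h1S] at hc
      simp at hc
    · exfalso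
      have h0 : F (Sum.inl ()) ∩ S = ∅ := hFQ (Sum.inl ())
      have h1 : F (Sum.inr (Sum.inr ⟨x, hx⟩)) ∩ S = x := hFQ (Sum.inr (Sum.inr ⟨x, hx⟩))
      rw [← hij] at h0
      have hc := (Finset.mem_powersetCard.mp hx).2
      rw [h1.symm.trans h0] at hc
      simp at hc
    · exfalso
      obtain ⟨h1S, _⟩ := hFQ (Sum.inr (Sum.inl (⟨e', he'⟩, b')))
      have h2 : F (Sum.inr (Sum.inr ⟨x, hx⟩)) ∩ S = x := hFQ (Sum.inr (Sum.inr ⟨x, hx⟩))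
      rw [← hij, h2] at h1S
      have hc := (Finset.mem_powersetCard.mp hx).2
      rw [h1S] at hc
      simp at hc
    · -- pair vs pair
      have h1 : F (Sum.inr (Sum.inr ⟨x, hx⟩)) ∩ S = x := hFQ (Sum.inr (Sum.inr ⟨x, hx⟩))
      have h2 : F (Sum.inr (Sum.inr ⟨x', hx'⟩)) ∩ S = x' := hFQ (Sum.inr (Sum.inr ⟨x', hx'⟩))
      rw [hij, h2] at h1
      obtain rfl : x = x' := h1.symm
      rfl
  have hcardI : Fintype.card
      (Unit ⊕ ({x // x ∈ S} × Bool) ⊕ {x // x ∈ S.powersetCard 2}) = 1 + 2 * p + p.choose 2 := by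
    simp only [Fintype.card_sum, Fintype.card_prod, Fintype.card_coe, Fintype.card_unit,
      Fintype.card_bool, Finset.card_powersetCard, hp]
    ring
  have hchoose : (p + 2).choose 2 = 1 + 2 * p + p.choose 2 := by
    have h1 : (p + 2).choose 2 = (p + 1).choose 1 + (p + 1).choose 2 :=
      Nat.choose_succ_succ (p + 1) 1
    have h2 : (p + 1).choose 2 = p.choose 1 + p.choose 2 := Nat.choose_succ_succ p 1
    rw [Nat.choose_one_right] at h1 h2
    omega
  set T := Finset.image F Finset.univ with hT
  have hTcard : T.card = 1 + 2 * p + p.choose 2 := by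
    rw [hT, Finset.card_image_of_injective _ hinj, Finset.card_univ, hcardI]
  have hsub : ↑T ⊆ cycleEdgeSets (cycleGraph n ⊔ fromEdgeSet (↑S : Set (Sym2 (Fin n)))) := by
    intro E hE
    simp only [hT, Finset.coe_image, Set.mem_image, Finset.mem_coe, Finset.mem_univ] at hE
    obtain ⟨i, _, rfl⟩ := hE
    exact hFC i
  calc (p + 2).choose 2 = T.card := by omega
    _ = (↑T : Set (Finset (Sym2 (Fin n)))).ncard := (Set.ncard_coe_finset T).symm
    _ ≤ _ := Set.ncard_le_ncard hsub (Set.toFinite _)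

end Aux
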